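/- If λ is an eigenvalue of the compression PAP|_M of a bounded operator A to a finite-dimensional subspace M ⊆ H, with eigenvector g ∈ M, ‖g‖ = 1, and λ ∈ ∂W(A) lies on the boundary of the numerical range of A, and the numerical range of the compression is a line segment with λ an endpoint, and M contains f and Af for some unit vector f with ⟨Af,f⟩ = λ, then λ is an eigenvalue of A. -/

import Mathlib

open scoped ComplexInnerProductSpace

/-- The numerical range `W(A) = {⟨Af, f⟩ : ‖f‖ = 1}`. -/
def numericalRange {H : Type*} [NormedAddCommGroup H] [InnerProductSpace ℂ H]
    (A : H →L[ℂ] H) : Set ℂ :=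
  {z | ∃ f : H, ‖f‖ = 1 ∧ ⟪f, A f⟫ = z}

/-- The numerical range of the compression `PAP|_M` of `A` to a subspace `M`:
for `g ∈ M`, `⟨PAPg, g⟩ = ⟨Ag, g⟩`. -/
def compressionNumericalRange {H : Type*} [NormedAddCommGroup H]
    [InnerProductSpace ℂ H] (A : H →L[ℂ] H) (M : Submodule ℂ H) : Set ℂ :=
  {z | ∃ g ∈ M, ‖g‖ = 1 ∧ ⟪g, A g⟫ = z}

lemma aux_real (a b : ℝ) (h : ∀ ε : ℝ, 0 ≤ ε * a + ε^2 * b) : a = 0 := by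
  by_contra ha
  have hb : (0:ℝ) < |b| + 1 := by positivity
  have h1 := h (-a / (|b| + 1))
  have h2 : (-a/(|b|+1)) * a + (-a/(|b|+1))^2 * b
      = (a^2 * (b - (|b|+1))) / (|b|+1)^2 := by field_simp; ring
  rw [h2] at h1
  have h3 : b - (|b|+1) < 0 := by nlinarith [le_abs_self b]
  have h4 : 0 < a^2 := by positivity
  have h5 : a^2*(b-(|b|+1)) < 0 := mul_neg_of_pos_of_neg h4 h3
  have h6 : a^2*(b-(|b|+1))/(|b|+1)^2 < 0 := div_neg_of_neg_of_pos h5 (pow_pos hb 2)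
  linarith

lemma aux_complex (u v d : ℂ)
    (h : ∀ ε : ℝ, ∃ c : ℝ, 0 ≤ c ∧ (ε:ℂ) * u + (ε:ℂ)^2 * v = (c:ℂ) * d) : u = 0 := by
  obtain ⟨c1, hc1, h1⟩ := h 1
  obtain ⟨c2, hc2, h2⟩ := h (-1)
  have hu : u = (((c1 - c2)/2 : ℝ) : ℂ) * d := by
    push_cast; push_cast at h1 h2; linear_combination (h1 - h2)/2
  have hv : v = (((c1 + c2)/2 : ℝ) : ℂ) * d := by
    push_cast; push_cast at h1 h2; linear_combination (h1 + h2)/2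
  rcases eq_or_ne d 0 with hd | hd
  · simp [hu, hd]
  · have hk : ((c1 - c2)/2 : ℝ) = 0 := by
      apply aux_real _ ((c1+c2)/2)
      intro ε
      obtain ⟨c, hc, hce⟩ := h ε
      rw [hu, hv] at hce
      have hce' : ((ε * ((c1-c2)/2) + ε^2 * ((c1+c2)/2) : ℝ) : ℂ) * d = (c:ℂ) * d := by
        push_cast at hce ⊢; linear_combination hce
      have : ((ε * ((c1-c2)/2) + ε^2 * ((c1+c2)/2) : ℝ) : ℂ) = (c:ℂ) :=
        mul_right_cancel₀ hd hce'
      have : ε * ((c1-c2)/2) + ε^2 * ((c1+c2)/2) = c := by exact_mod_cast this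
      rw [this]; exact hc
    rw [hu, hk]; simp

/-- if `lam = ⟨Af, f⟩ ∈ ∂W(A)` (`‖f‖ = 1`), `M = span{f, Af}`, `g ∈ M` is a
unit eigenvector of the compression `PAP|_M` for the eigenvalue `lam` (expressed
projection-free: `⟨h, Ag⟩ = lam ⟨h, g⟩` for all `h ∈ M`), and the numerical range of the
compression is a line segment with `lam` an endpoint, then `lam` is an eigenvalue of `A`. -/
theorem compression_eigenvalue_segment_endpoint_is_eigenvalue {H : Type*}
    [NormedAddCommGroup H] [InnerProductSpace ℂ H] [CompleteSpace H]
    (A : H →L[ℂ] H) (f g : H) (lam : ℂ) (hf : ‖f‖ = 1) (hlam : ⟪f, A f⟫ = lam)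
    (hb : lam ∈ frontier (numericalRange A))
    (hgM : g ∈ Submodule.span ℂ {f, A f}) (hg : ‖g‖ = 1)
    (heig : ∀ h ∈ Submodule.span ℂ {f, A f}, ⟪h, A g⟫ = lam * ⟪h, g⟫)
    (hseg : ∃ a b : ℂ, compressionNumericalRange A (Submodule.span ℂ {f, A f}) =
      segment ℝ a b ∧ (lam = a ∨ lam = b)) :
    ∃ v : H, v ≠ 0 ∧ A v = lam • v := by
  classical
  obtain ⟨a, b, hW, hend⟩ := hseg
  set M := Submodule.span ℂ {f, A f} with hM
  obtain ⟨b', hW'⟩ : ∃ b', compressionNumericalRange A M = segment ℝ lam b' := by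
    rcases hend with h | h
    · exact ⟨b, by rw [hW, h]⟩
    · exact ⟨a, by rw [hW, segment_symm, h]⟩
  set w := A f - lam • f with hwdef
  have hfM : f ∈ M := Submodule.subset_span (Set.mem_insert _ _)
  have hAfM : A f ∈ M := Submodule.subset_span (Set.mem_insert_of_mem _ rfl)
  have hwM : w ∈ M := Submodule.sub_mem _ hAfM (Submodule.smul_mem _ _ hfM)
  have hff : ⟪f, f⟫ = 1 := by
    rw [inner_self_eq_norm_sq_to_K, hf]; norm_num
  have hfw : ⟪f, w⟫ = 0 := by
    rw [hwdef, inner_sub_right, inner_smul_right, hlam, hff]; ring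
  have hwf : ⟪w, f⟫ = 0 := by rw [← inner_conj_symm, hfw]; simp
  have hww : ⟪w, w⟫ = ((‖w‖:ℂ))^2 := by
    rw [inner_self_eq_norm_sq_to_K]; norm_cast
  have hwAf : ⟪w, A f⟫ = ((‖w‖:ℂ))^2 := by
    have hAf : A f = w + lam • f := by rw [hwdef]; abel
    rw [hAf, inner_add_right, inner_smul_right, hww, hwf]; ring
  -- the key family of constraints
  have key : ∀ t : ℂ, ∃ c : ℝ, 0 ≤ c ∧
      t * ⟪f, A w⟫ + (starRingEnd ℂ) t * ((‖w‖:ℂ)^2)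
        + t * (starRingEnd ℂ) t * (⟪w, A w⟫ - lam * ((‖w‖:ℂ)^2))
      = (c:ℂ) * (b' - lam) := by
    intro t
    set h := f + t • w with hh
    have hhM : h ∈ M := M.add_mem hfM (M.smul_mem _ hwM)
    have hnorm : ‖h‖^2 = 1 + ‖t‖^2 * ‖w‖^2 := by
      rw [hh, @norm_add_sq ℂ]
      simp [inner_smul_right, hfw, hf, norm_smul, mul_pow]
    have hpos : 0 < ‖h‖ := by
      have h0 : (0:ℝ) ≤ ‖t‖^2 * ‖w‖^2 := by positivity
      have h1 : (1:ℝ) ≤ ‖h‖^2 := by rw [hnorm]; linarith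
      nlinarith [norm_nonneg h]
    have hne : ((‖h‖:ℝ):ℂ) ≠ 0 := Complex.ofReal_ne_zero.mpr (ne_of_gt hpos)
    have hAh : A h = A f + t • A w := by rw [hh, map_add, map_smul]
    have hinner : ⟪h, A h⟫ = lam + t * ⟪f, A w⟫ + (starRingEnd ℂ) t * ((‖w‖:ℂ)^2)
        + (starRingEnd ℂ) t * t * ⟪w, A w⟫ := by
      rw [hh, hAh, inner_add_left, inner_add_right, inner_add_right,
        inner_smul_left, inner_smul_right, inner_smul_left, inner_smul_right,
        hlam, hwAf]
      ring
    set u := ((‖h‖:ℝ):ℂ)⁻¹ • h with hu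
    have huM : u ∈ M := M.smul_mem _ hhM
    have hun : ‖u‖ = 1 := by
      rw [hu, norm_smul, norm_inv, Complex.norm_real, norm_norm,
        inv_mul_cancel₀ (ne_of_gt hpos)]
    have huAu : ⟪u, A u⟫ = (((‖h‖:ℝ):ℂ)^2)⁻¹ * ⟪h, A h⟫ := by
      rw [hu, map_smul, inner_smul_left, inner_smul_right, map_inv₀,
        Complex.conj_ofReal]
      rw [← mul_assoc, ← mul_inv, ← sq]
    have hmem : ⟪u, A u⟫ ∈ segment ℝ lam b' := by
      rw [← hW']
      exact ⟨u, huM, hun, rfl⟩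
    obtain ⟨s1, s2, hs1, hs2, hsum, hcomb⟩ := hmem
    have hcomb' : (s1:ℂ) * lam + (s2:ℂ) * b' = ⟪u, A u⟫ := by
      rw [← hcomb]; simp [Complex.real_smul]
    have h1 : ⟪h, A h⟫ = ((‖h‖:ℝ):ℂ)^2 * ((s1:ℂ) * lam + (s2:ℂ) * b') := by
      rw [hcomb', huAu, ← mul_assoc, mul_inv_cancel₀ (pow_ne_zero 2 hne), one_mul]
    have hN' : ((‖h‖:ℝ):ℂ)^2 = 1 + t * (starRingEnd ℂ) t * ((‖w‖:ℂ)^2) := by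
      have ht2 : ((‖t‖^2:ℝ):ℂ) = t * (starRingEnd ℂ) t := by
        rw [Complex.mul_conj, Complex.normSq_eq_norm_sq]
      have := hnorm
      calc ((‖h‖:ℝ):ℂ)^2 = ((‖h‖^2 : ℝ):ℂ) := by push_cast; ring
        _ = ((1 + ‖t‖^2 * ‖w‖^2 : ℝ):ℂ) := by rw [hnorm]
        _ = 1 + t * (starRingEnd ℂ) t * ((‖w‖:ℂ)^2) := by push_cast [← ht2]; push_cast; ring
    have hsumC : (s1:ℂ) + (s2:ℂ) = 1 := by exact_mod_cast hsum
    refine ⟨s2 * ‖h‖^2, by positivity, ?_⟩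
    push_cast
    linear_combination h1 - hinner + lam * hN' + ((‖h‖:ℝ):ℂ)^2 * lam * hsumC
  -- extract the two directional constraints
  have hpR : ⟪f, A w⟫ + ((‖w‖:ℂ))^2 = 0 := by
    apply aux_complex _ (⟪w, A w⟫ - lam * ((‖w‖:ℂ)^2)) (b' - lam)
    intro ε
    obtain ⟨c, hc, he⟩ := key (ε:ℂ)
    refine ⟨c, hc, ?_⟩
    rw [Complex.conj_ofReal] at he
    linear_combination he
  have hpR2 : Complex.I * (⟪f, A w⟫ - ((‖w‖:ℂ))^2) = 0 := by
    apply aux_complex _ (⟪w, A w⟫ - lam * ((‖w‖:ℂ)^2)) (b' - lam)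
    intro ε
    obtain ⟨c, hc, he⟩ := key ((ε:ℂ) * Complex.I)
    refine ⟨c, hc, ?_⟩
    rw [map_mul, Complex.conj_ofReal, Complex.conj_I] at he
    linear_combination he + (ε:ℂ)^2 * (⟪w, A w⟫ - lam * ((‖w‖:ℂ)^2)) * Complex.I_sq
  have hpR2' : ⟪f, A w⟫ - ((‖w‖:ℂ))^2 = 0 := by
    rcases mul_eq_zero.mp hpR2 with h | h
    · exact absurd h Complex.I_ne_zero
    · exact h
  have hR : ((‖w‖:ℂ))^2 = 0 := by linear_combination (hpR - hpR2')/2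
  have hwz : w = 0 := by
    have : (‖w‖:ℂ) = 0 := by
      exact pow_eq_zero_iff (by norm_num) |>.mp hR
    have : ‖w‖ = 0 := by exact_mod_cast this
    exact norm_eq_zero.mp this
  refine ⟨f, ?_, sub_eq_zero.mp (hwdef ▸ hwz)⟩
  intro h0; rw [h0] at hf; simp at hf
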